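/- The matrix exponential of tL maps the vectorized 5th coordinate according to: (exp(tL))(0,4) = (γ₁/(γ₁+γ₂))(1 - e^{-(γ₁+γ₂)t}), (exp(tL))(8,4) = (γ₂/(γ₁+γ₂))(1 - e^{-(γ₁+γ₂)t}), (exp(tL))(4,4) = e^{-(γ₁+γ₂)t}, (exp(tL))(i,i) = e^{-½(γ₁+γ₂)t} for i ∈ {1,3,5,7}, (exp(tL))(i,i) = 1 for i ∈ {0,2,6,8}, and all other entries are 0. -/

import Mathlib

open Matrix

noncomputable def laserL (γ₁ γ₂ : ℝ) : Matrix (Fin 9) (Fin 9) ℝ :=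
  Matrix.of fun i j =>
    if i = 0 ∧ j = 4 then γ₁
    else if i = 8 ∧ j = 4 then γ₂
    else if i = 4 ∧ j = 4 then -(γ₁ + γ₂)
    else if i = j ∧ (i = 1 ∨ i = 3 ∨ i = 5 ∨ i = 7) then -(1/2) * (γ₁ + γ₂)
    else 0

/-- Change-of-basis matrix diagonalizing `laserL`. -/
noncomputable def laserC (γ₁ γ₂ : ℝ) : Matrix (Fin 9) (Fin 9) ℝ :=
  Matrix.of fun i j =>
    if j = 4 then (if i = 0 then γ₁ else if i = 4 then -(γ₁ + γ₂)
      else if i = 8 then γ₂ else 0)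
    else if i = j then 1 else 0

/-- Inverse of `laserC`. -/
noncomputable def laserCinv (γ₁ γ₂ : ℝ) : Matrix (Fin 9) (Fin 9) ℝ :=
  Matrix.of fun i j =>
    if j = 4 then (if i = 0 then γ₁ / (γ₁ + γ₂) else if i = 4 then -(1 / (γ₁ + γ₂))
      else if i = 8 then γ₂ / (γ₁ + γ₂) else 0)
    else if i = j then 1 else 0

/-- Eigenvalues of `laserL`, scaled by `t`. -/
noncomputable def laserD (γ₁ γ₂ t : ℝ) : Fin 9 → ℝ := fun i =>
  if i = 4 then -(γ₁ + γ₂) * t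
  else if i = 1 ∨ i = 3 ∨ i = 5 ∨ i = 7 then -(1/2) * (γ₁ + γ₂) * t
  else 0

set_option maxHeartbeats 1000000 in
lemma laserC_mul_Cinv (γ₁ γ₂ : ℝ) (hs : γ₁ + γ₂ ≠ 0) :
    laserC γ₁ γ₂ * laserCinv γ₁ γ₂ = 1 := by
  ext i j
  fin_cases i <;> fin_cases j <;>
    simp (config := { decide := true }) [laserC, laserCinv, Matrix.mul_apply,
      Fin.sum_univ_succ, Matrix.one_apply] <;> field_simp <;> ring

set_option maxHeartbeats 1000000 in
lemma laserCinv_mul_C (γ₁ γ₂ : ℝ) (hs : γ₁ + γ₂ ≠ 0) :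
    laserCinv γ₁ γ₂ * laserC γ₁ γ₂ = 1 := by
  ext i j
  fin_cases i <;> fin_cases j <;>
    simp (config := { decide := true }) [laserC, laserCinv, Matrix.mul_apply,
      Fin.sum_univ_succ, Matrix.one_apply] <;> field_simp <;> ring

set_option maxHeartbeats 2000000 in
lemma laser_decomp (γ₁ γ₂ t : ℝ) (hs : γ₁ + γ₂ ≠ 0) :
    t • laserL γ₁ γ₂ =
      laserC γ₁ γ₂ * Matrix.diagonal (laserD γ₁ γ₂ t) * laserCinv γ₁ γ₂ := by
  ext i j
  fin_cases i <;> fin_cases j <;>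
    simp (config := { decide := true }) [laserC, laserCinv, laserD, laserL,
      Matrix.mul_apply, Matrix.mul_diagonal, Matrix.diagonal_apply,
      Fin.sum_univ_succ] <;>
    field_simp <;> ring

set_option maxHeartbeats 2000000 in
theorem stmt18 (γ₁ γ₂ t : ℝ) (h₁ : 0 < γ₁) (h₂ : 0 < γ₂) :
    NormedSpace.exp (t • laserL γ₁ γ₂) = Matrix.of fun i j =>
      if i = 0 ∧ j = 4 then γ₁ / (γ₁ + γ₂) * (1 - Real.exp (-(γ₁ + γ₂) * t))
      else if i = 8 ∧ j = 4 then γ₂ / (γ₁ + γ₂) * (1 - Real.exp (-(γ₁ + γ₂) * t))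
      else if i = 4 ∧ j = 4 then Real.exp (-(γ₁ + γ₂) * t)
      else if i = j ∧ (i = 1 ∨ i = 3 ∨ i = 5 ∨ i = 7) then
        Real.exp (-(1/2) * (γ₁ + γ₂) * t)
      else if i = j then 1
      else 0 := by
  have hs : γ₁ + γ₂ ≠ 0 := by positivity
  set U : (Matrix (Fin 9) (Fin 9) ℝ)ˣ :=
    ⟨laserC γ₁ γ₂, laserCinv γ₁ γ₂, laserC_mul_Cinv γ₁ γ₂ hs,
      laserCinv_mul_C γ₁ γ₂ hs⟩ with hU
  have h1 : (U : Matrix (Fin 9) (Fin 9) ℝ) = laserC γ₁ γ₂ := rfl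
  have h2 : ((U⁻¹ : (Matrix (Fin 9) (Fin 9) ℝ)ˣ) : Matrix (Fin 9) (Fin 9) ℝ)
      = laserCinv γ₁ γ₂ := rfl
  rw [laser_decomp γ₁ γ₂ t hs, ← h1, ← h2, Matrix.exp_units_conj,
    Matrix.exp_diagonal, h1, h2]
  have hexp : NormedSpace.exp (laserD γ₁ γ₂ t) =
      fun i => Real.exp (laserD γ₁ γ₂ t i) := by
    rw [Pi.exp_def, Real.exp_eq_exp_ℝ]
  rw [hexp]
  ext i j
  fin_cases i <;> fin_cases j <;>
    simp (config := { decide := true }) [laserC, laserCinv, laserD,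
      Matrix.mul_apply, Matrix.mul_diagonal, Matrix.diagonal_apply,
      Fin.sum_univ_succ] <;>
    field_simp <;> ring
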